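/- Let g be a strictly increasing character-preserving embedding of S₁ into S₂, let D be the subsequence of S₂ at positions outside im(g), and let B be the bitvector of length |S₂| with 1s exactly at positions outside im(g). Then for every character a: occ(a, S₂) = occ(a, S₁) + occ(a, D), and more generally for every position p of S₂: rank_a(S₂, p) = rank_a(S₁, rank₀(B, p)) + rank_a(D, rank₁(B, p)). -/

import Mathlib

set_option linter.unusedSectionVars false
set_option linter.unusedVariables false


namespace RS

variable {α : Type*} [DecidableEq α]

/-- 1-indexed position of the `j`-th occurrence of `a` in `S` (junk value if out of range). -/
def sel (a : α) (S : List α) (j : ℕ) : ℕ :=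
  (((List.range S.length).filter (fun p => decide (S[p]? = some a))).getD (j - 1) 0) + 1

/-- Number of occurrences of `a` among the first `i` characters of `S` (1-indexed). -/
def rank (a : α) (S : List α) (i : ℕ) : ℕ := (S.take i).count a

/-- Total number of occurrences of `a` in `S`. -/
def occ (a : α) (S : List α) : ℕ := S.count a

def rank0 (B : List Bool) (i : ℕ) : ℕ := (B.take i).count false
def rank1 (B : List Bool) (i : ℕ) : ℕ := (B.take i).count true
def sel0 (B : List Bool) (i : ℕ) : ℕ := sel false B i
def sel1 (B : List Bool) (i : ℕ) : ℕ := sel true B i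

/-- `f` is a strictly increasing, character-preserving embedding of `S₂` into `S₁`
(all positions 1-indexed). -/
def Emb (S₂ S₁ : List α) (f : ℕ → ℕ) : Prop :=
  (∀ j, 1 ≤ j → j ≤ S₂.length → 1 ≤ f j ∧ f j ≤ S₁.length) ∧
  (∀ j k, 1 ≤ j → j < k → k ≤ S₂.length → f j < f k) ∧
  (∀ j, 1 ≤ j → j ≤ S₂.length → S₂[j - 1]? = S₁[f j - 1]?)

/-- Is the 1-indexed position `p` in the image `{f 1, …, f m}`? -/
def inIm (m : ℕ) (f : ℕ → ℕ) (p : ℕ) : Bool :=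
  (List.range m).any (fun j => f (j + 1) == p)

/-- Bitvector of length `n` marking with `true` (`1`) the 1-indexed positions
outside the image `{f 1, …, f m}`. -/
def markB (n m : ℕ) (f : ℕ → ℕ) : List Bool :=
  (List.range n).map (fun p => !inIm m f (p + 1))

/-- Bitvector of length `occ x S` whose `i`-th bit is `true` (`1`) iff the position
of the `i`-th occurrence of `x` in `S` is outside the image `{f 1, …, f m}`. -/
def markBx (x : α) (S : List α) (m : ℕ) (f : ℕ → ℕ) : List Bool :=
  (List.range (occ x S)).map (fun i => !inIm m f (sel x S (i + 1)))

/-- The subsequence of `S` consisting of the characters at positions outside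
the image `{g 1, …, g m}`, in order. -/
def delIm (S : List α) (m : ℕ) (g : ℕ → ℕ) : List α :=
  (List.range S.length).filterMap (fun p => if inIm m g (p + 1) then none else S[p]?)

lemma inIm_iff {m p : ℕ} {f : ℕ → ℕ} :
    inIm m f p = true ↔ ∃ j, 1 ≤ j ∧ j ≤ m ∧ f j = p := by
  simp only [inIm, List.any_eq_true, List.mem_range, beq_iff_eq]
  constructor
  · rintro ⟨j, hj, hfj⟩; exact ⟨j+1, by omega, by omega, hfj⟩
  · rintro ⟨j, h1, h2, h3⟩
    exact ⟨j-1, by omega, by rw [Nat.sub_add_cancel h1]; exact h3⟩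

section Main

variable {S₁ S₂ : List α} {g : ℕ → ℕ}

lemma emb_le_of_le (hg : Emb S₁ S₂ g) {j k : ℕ} (hj : 1 ≤ j) (hk : k ≤ S₁.length)
    (hjk : j ≤ k) : g j ≤ g k := by
  rcases eq_or_lt_of_le hjk with rfl | h
  · exact le_rfl
  · exact (hg.2.1 j k hj h hk).le

lemma emb_lt_iff (hg : Emb S₁ S₂ g) {j k : ℕ} (hj : 1 ≤ j) (hjm : j ≤ S₁.length)
    (hk : 1 ≤ k) (hkm : k ≤ S₁.length) : g j < g k ↔ j < k := by
  constructor
  · intro h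
    by_contra hc
    exact absurd (emb_le_of_le hg hk hjm (by omega)) (by omega)
  · intro h; exact hg.2.1 j k hj h hkm

/-- Number of image positions among `1..p`, counted by filtering `range p`. -/
lemma length_filter_inIm (hg : Emb S₁ S₂ g) (p t : ℕ) (ht : t ≤ S₁.length)
    (h : ∀ k, 1 ≤ k → k ≤ S₁.length → (g k ≤ p ↔ k ≤ t)) :
    ((List.range p).filter (fun q => inIm S₁.length g (q+1))).length = t := by
  have conv1 : ((List.range p).filter (fun q => inIm S₁.length g (q+1))).length
      = ((Finset.range p).filter (fun q => inIm S₁.length g (q+1) = true)).card := by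
    simp [Finset.card_filter, ← List.countP_eq_length_filter, Finset.range, Multiset.range,
      Finset.filter, Multiset.filter_coe, Multiset.countP, List.countP]
  rw [conv1]
  have := Finset.card_bij
    (s := Finset.Icc 1 t)
    (t := (Finset.range p).filter (fun q => inIm S₁.length g (q+1) = true))
    (fun k _ => g k - 1)
    (by
      intro k hk
      simp only [Finset.mem_Icc] at hk
      have hk1 : 1 ≤ k := hk.1
      have hkm : k ≤ S₁.length := le_trans hk.2 ht
      have hgk1 : 1 ≤ g k := (hg.1 k hk1 hkm).1
      have hgkp : g k ≤ p := (h k hk1 hkm).2 hk.2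
      simp only [Finset.mem_filter, Finset.mem_range]
      refine ⟨by omega, ?_⟩
      rw [inIm_iff]
      exact ⟨k, hk1, hkm, by omega⟩)
    (by
      intro j hj k hk heq
      have heq' : g j - 1 = g k - 1 := heq
      simp only [Finset.mem_Icc] at hj hk
      have h1 : 1 ≤ g j := (hg.1 j hj.1 (le_trans hj.2 ht)).1
      have h2 : 1 ≤ g k := (hg.1 k hk.1 (le_trans hk.2 ht)).1
      have : g j = g k := by omega
      by_contra hne
      rcases Nat.lt_or_ge j k with hlt | hge
      · have := hg.2.1 j k hj.1 hlt (le_trans hk.2 ht); omega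
      · have hlt : k < j := by omega
        have := hg.2.1 k j hk.1 hlt (le_trans hj.2 ht); omega)
    (by
      intro q hq
      simp only [Finset.mem_filter, Finset.mem_range] at hq
      obtain ⟨hqp, him⟩ := hq
      rw [inIm_iff] at him
      obtain ⟨k, hk1, hkm, hgk⟩ := him
      have hkt : k ≤ t := (h k hk1 hkm).1 (by omega)
      exact ⟨k, Finset.mem_Icc.2 ⟨hk1, hkt⟩, show g k - 1 = q by omega⟩)
  rw [← this, Nat.card_Icc]
  omega

lemma markB_take (p : ℕ) (hp : p ≤ S₂.length) :
    (markB S₂.length S₁.length g).take p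
      = (List.range p).map (fun q => !inIm S₁.length g (q + 1)) := by
  rw [markB, ← List.map_take, List.take_range, Nat.min_eq_left hp]

lemma rank0_markB (p : ℕ) (hp : p ≤ S₂.length) :
    rank0 (markB S₂.length S₁.length g) p
      = ((List.range p).filter (fun q => inIm S₁.length g (q+1))).length := by
  rw [rank0, markB_take p hp, List.count, List.countP_map, List.countP_eq_length_filter]
  have heq : ((fun x => x == false) ∘ fun q => !inIm S₁.length g (q + 1))
      = (fun q => inIm S₁.length g (q+1)) := by
    funext q; simp [Function.comp]
  rw [heq]

lemma rank1_markB (p : ℕ) (hp : p ≤ S₂.length) :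
    rank1 (markB S₂.length S₁.length g) p
      = ((List.range p).filter (fun q => !inIm S₁.length g (q+1))).length := by
  rw [rank1, markB_take p hp, List.count, List.countP_map, List.countP_eq_length_filter]
  have heq : ((fun x => x == true) ∘ fun q => !inIm S₁.length g (q + 1))
      = (fun q => !inIm S₁.length g (q+1)) := by
    funext q; simp [Function.comp]
  rw [heq]

/-- filterMap of the delIm function has the same length as the filter. -/
lemma filterMap_length_eq (l : List ℕ) (hl : ∀ q ∈ l, q < S₂.length) :
    (l.filterMap (fun q => if inIm S₁.length g (q + 1) then none else S₂[q]?)).length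
      = (l.filter (fun q => !inIm S₁.length g (q+1))).length := by
  induction l with
  | nil => simp
  | cons q l ih =>
    have hq : q < S₂.length := hl q List.mem_cons_self
    have ih' := ih (fun r hr => hl r (List.mem_cons_of_mem q hr))
    by_cases hi : inIm S₁.length g (q + 1) = true
    · simp [List.filterMap_cons, List.filter_cons, hi, ih']
    · have : S₂[q]? = some (S₂.get ⟨q, hq⟩) := by
        rw [List.getElem?_eq_getElem hq]; rfl
      simp [List.filterMap_cons, List.filter_cons, hi, this, ih']

lemma count_take_succ (a : α) (l : List α) (k : ℕ) (c : α) (hc : l[k]? = some c) :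
    (l.take (k+1)).count a = (l.take k).count a + if c = a then 1 else 0 := by
  rw [List.take_succ, hc, List.count_append]
  by_cases h : c = a <;> simp [h, List.count_cons, List.count_nil]

/-- image case: the next character of S₁ agrees. -/
lemma key_im (hg : Emb S₁ S₂ g) (p : ℕ) (hp : p < S₂.length)
    (him : inIm S₁.length g (p+1) = true) :
    S₁[rank0 (markB S₂.length S₁.length g) p]? = S₂[p]? := by
  rw [inIm_iff] at him
  obtain ⟨j, hj1, hjm, hgj⟩ := him
  have hr0 : rank0 (markB S₂.length S₁.length g) p = j - 1 := by
    rw [rank0_markB p (by omega)]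
    apply length_filter_inIm hg p (j-1) (by omega)
    intro k hk1 hkm
    have h1 : 1 ≤ g k := (hg.1 k hk1 hkm).1
    constructor
    · intro hle
      have : g k < g j := by omega
      have := (emb_lt_iff hg hk1 hkm hj1 hjm).1 this
      omega
    · intro hle
      have : k < j := by omega
      have := (emb_lt_iff hg hk1 hkm hj1 hjm).2 this
      omega
  rw [hr0]
  have := hg.2.2 j hj1 hjm
  rw [this, hgj]
  norm_num

/-- non-image case: the next character of D agrees. -/
lemma key_del (hg : Emb S₁ S₂ g) (p : ℕ) (hp : p < S₂.length)
    (him : inIm S₁.length g (p+1) = false) :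
    (delIm S₂ S₁.length g)[rank1 (markB S₂.length S₁.length g) p]? = S₂[p]? := by
  set h : ℕ → Option α := fun q => if inIm S₁.length g (q + 1) then none else S₂[q]? with hh
  obtain ⟨c, hc⟩ : ∃ c, S₂[p]? = some c := ⟨S₂.get ⟨p, hp⟩, by rw [List.getElem?_eq_getElem hp]; rfl⟩
  have hsplit : List.range S₂.length
      = List.range p ++ (p :: (List.range (S₂.length - p - 1)).map (fun i => p + (i+1))) := by
    conv_lhs => rw [show S₂.length = p + (S₂.length - p) by omega, List.range_add]
    congr 1
    rw [show S₂.length - p = (S₂.length - p - 1) + 1 by omega, List.range_succ_eq_map]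
    simp [Function.comp]
  have hDp : delIm S₂ S₁.length g
      = (List.range p).filterMap h ++ (c :: ((List.range (S₂.length - p - 1)).map (fun i => p + (i+1))).filterMap h) := by
    rw [delIm, ← hh, hsplit, List.filterMap_append, List.filterMap_cons]
    have : h p = some c := by simp [hh, him, hc]
    rw [this]
  have hlen : rank1 (markB S₂.length S₁.length g) p = ((List.range p).filterMap h).length := by
    rw [rank1_markB p (by omega), filterMap_length_eq]
    intro q hq; simp at hq; omega
  rw [hDp, hlen, List.getElem?_append_right le_rfl]
  simp [hc]

lemma main_rank (hg : Emb S₁ S₂ g) (a : α) (p : ℕ) (hp : p ≤ S₂.length) :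
    rank a S₂ p =
      rank a S₁ (rank0 (markB S₂.length S₁.length g) p) +
        rank a (delIm S₂ S₁.length g) (rank1 (markB S₂.length S₁.length g) p) := by
  induction p with
  | zero => simp [rank, rank0, rank1]
  | succ p ih =>
    have hplt : p < S₂.length := hp
    have ih' := ih (by omega)
    obtain ⟨c, hc⟩ : ∃ c, S₂[p]? = some c :=
      ⟨S₂.get ⟨p, hplt⟩, by rw [List.getElem?_eq_getElem hplt]; rfl⟩
    have hB : (markB S₂.length S₁.length g)[p]? = some (!inIm S₁.length g (p+1)) := by
      simp [markB, List.getElem?_map, List.getElem?_range hplt]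
    have hS2 : rank a S₂ (p+1) = rank a S₂ p + if c = a then 1 else 0 :=
      count_take_succ a S₂ p c hc
    by_cases him : inIm S₁.length g (p+1) = true
    · -- bit is false: rank0 increments, rank1 stays
      have hb0 : rank0 (markB S₂.length S₁.length g) (p+1)
          = rank0 (markB S₂.length S₁.length g) p + 1 := by
        rw [rank0, rank0, count_take_succ false _ p _ hB]
        simp [him]
      have hb1 : rank1 (markB S₂.length S₁.length g) (p+1)
          = rank1 (markB S₂.length S₁.length g) p := by
        rw [rank1, rank1, count_take_succ true _ p _ hB]
        simp [him]
      have hkey : S₁[rank0 (markB S₂.length S₁.length g) p]? = some c := by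
        rw [key_im hg p hplt him, hc]
      have hS1 : rank a S₁ (rank0 (markB S₂.length S₁.length g) p + 1)
          = rank a S₁ (rank0 (markB S₂.length S₁.length g) p) + if c = a then 1 else 0 :=
        count_take_succ a S₁ _ c hkey
      rw [hS2, hb0, hb1, hS1, ih']; ring
    · -- bit is true: rank1 increments
      have him' : inIm S₁.length g (p+1) = false := by simpa using him
      have hb0 : rank0 (markB S₂.length S₁.length g) (p+1)
          = rank0 (markB S₂.length S₁.length g) p := by
        rw [rank0, rank0, count_take_succ false _ p _ hB]
        simp [him']
      have hb1 : rank1 (markB S₂.length S₁.length g) (p+1)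
          = rank1 (markB S₂.length S₁.length g) p + 1 := by
        rw [rank1, rank1, count_take_succ true _ p _ hB]
        simp [him']
      have hkey : (delIm S₂ S₁.length g)[rank1 (markB S₂.length S₁.length g) p]? = some c := by
        rw [key_del hg p hplt him', hc]
      have hD : rank a (delIm S₂ S₁.length g) (rank1 (markB S₂.length S₁.length g) p + 1)
          = rank a (delIm S₂ S₁.length g) (rank1 (markB S₂.length S₁.length g) p)
            + if c = a then 1 else 0 :=
        count_take_succ a _ _ c hkey
      rw [hS2, hb0, hb1, hD, ih']; ring

end Main

theorem rank_split_of_emb (S₁ S₂ : List α) (g : ℕ → ℕ) (hg : Emb S₁ S₂ g) (a : α) :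
    occ a S₂ = occ a S₁ + occ a (delIm S₂ S₁.length g) ∧
    ∀ p : ℕ, 1 ≤ p → p ≤ S₂.length →
      rank a S₂ p =
        rank a S₁ (rank0 (markB S₂.length S₁.length g) p) +
          rank a (delIm S₂ S₁.length g) (rank1 (markB S₂.length S₁.length g) p) := by
  constructor
  · have hmain := main_rank hg a S₂.length le_rfl
    have h1 : rank a S₂ S₂.length = occ a S₂ := by
      rw [rank, List.take_length]; rfl
    have h2 : rank0 (markB S₂.length S₁.length g) S₂.length = S₁.length := by
      rw [rank0_markB S₂.length le_rfl]
      apply length_filter_inIm hg S₂.length S₁.length le_rfl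
      intro k hk1 hkm
      exact ⟨fun _ => hkm, fun _ => (hg.1 k hk1 hkm).2⟩
    have h3 : rank a S₁ S₁.length = occ a S₁ := by
      rw [rank, List.take_length]; rfl
    have h4 : rank1 (markB S₂.length S₁.length g) S₂.length
        = (delIm S₂ S₁.length g).length := by
      rw [rank1_markB S₂.length le_rfl, delIm, filterMap_length_eq]
      intro q hq; simpa using hq
    have h5 : rank a (delIm S₂ S₁.length g) (delIm S₂ S₁.length g).length
        = occ a (delIm S₂ S₁.length g) := by
      rw [rank, List.take_length]; rfl
    rw [h1, h2, h3, h4, h5] at hmain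
    exact hmain
  · intro p _ hp
    exact main_rank hg a p hp

end RS
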